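/- Any Lindblad equation on matrices over ℂ^{n+1} whose channel list includes an operator L_k = c·a proportional (c ≠ 0) to the truncated annihilation operator a, and which has a Hermitian positive definite trace-1 equilibrium ρ_∞, satisfies: the only Hermitian G solving ρ_∞G + Gρ_∞ = ρ - ρ_∞ with ∑_k Tr([G,L_k]ρ_∞[G,L_k]†) = 0 and Tr(ρ) = 1 is G = 0, i.e., ρ = ρ_∞. -/

import Mathlib

open Matrix ComplexOrder

/-- The truncated annihilation operator on `ℂ^{n+1}`: `a |k⟩ = √k |k-1⟩`. -/
noncomputable def ann (n : ℕ) : Matrix (Fin (n+1)) (Fin (n+1)) ℂ :=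
  fun j k => if (j : ℕ) + 1 = (k : ℕ) then (Real.sqrt (k : ℕ) : ℂ) else 0

section Aux

variable {n : ℕ} (A : Matrix (Fin (n+1)) (Fin (n+1)) ℂ)

lemma mul_ann_succ (j : Fin (n+1)) (q : ℕ) (hq : q + 1 < n + 1) :
    (A * ann n) j ⟨q+1, hq⟩ = (Real.sqrt (q+1) : ℂ) * A j ⟨q, by omega⟩ := by
  rw [Matrix.mul_apply]
  rw [Finset.sum_eq_single (⟨q, by omega⟩ : Fin (n+1))]
  · simp [ann, mul_comm]
  · intro l _ hl
    have : (l:ℕ) + 1 ≠ q + 1 := by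
      intro h; apply hl; apply Fin.ext; simpa using h
    simp [ann, this]
    intro h; exact absurd (by omega) this
  · simp

lemma mul_ann_zero (j k : Fin (n+1)) (hk : (k:ℕ) = 0) :
    (A * ann n) j k = 0 := by
  rw [Matrix.mul_apply]
  apply Finset.sum_eq_zero
  intro l _
  have : (l:ℕ) + 1 ≠ (k:ℕ) := by omega
  simp [ann, this]

lemma ann_mul_lt (p : ℕ) (hp : p + 1 < n + 1) (k : Fin (n+1)) :
    (ann n * A) ⟨p, by omega⟩ k = (Real.sqrt (p+1) : ℂ) * A ⟨p+1, hp⟩ k := by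
  rw [Matrix.mul_apply]
  rw [Finset.sum_eq_single (⟨p+1, hp⟩ : Fin (n+1))]
  · simp [ann]
  · intro l _ hl
    have : p + 1 ≠ (l:ℕ) := by
      intro h; apply hl; apply Fin.ext; simp [← h]
    simp [ann, this]
  · simp

lemma sqrt_succ_ne (p : ℕ) : (Real.sqrt (p+1) : ℂ) ≠ 0 := by
  have : (0:ℝ) < Real.sqrt (p+1) := Real.sqrt_pos.mpr (by positivity)
  exact_mod_cast this.ne'

lemma comm_scalar (hA : A.IsHermitian) (h : A * ann n = ann n * A) :
    A = A 0 0 • (1 : Matrix (Fin (n+1)) (Fin (n+1)) ℂ) := by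
  have hrel : ∀ j k, (A * ann n) j k = (ann n * A) j k := fun j k => by rw [h]
  -- lower triangle is zero
  have hlow : ∀ (kk : ℕ) (j k : Fin (n+1)), (k:ℕ) = kk → (k:ℕ) < (j:ℕ) → A j k = 0 := by
    intro kk
    induction kk with
    | zero =>
      intro j k hk hjk
      have hp : ((j:ℕ)-1) + 1 < n + 1 := by omega
      have e1 := mul_ann_zero A ⟨(j:ℕ)-1, by omega⟩ k hk
      have e2 := ann_mul_lt A ((j:ℕ)-1) hp k
      have hj' : (⟨(j:ℕ)-1+1, hp⟩ : Fin (n+1)) = j := by apply Fin.ext; simp; omega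
      rw [hrel, e2, hj'] at e1
      have hs := sqrt_succ_ne ((j:ℕ)-1)
      rcases mul_eq_zero.mp e1 with h' | h'
      · exact absurd h' hs
      · exact h'
    | succ kk ih =>
      intro j k hk hjk
      have hp : ((j:ℕ)-1) + 1 < n + 1 := by omega
      have hkfin : k = ⟨kk+1, by omega⟩ := by apply Fin.ext; exact hk
      have e1 := mul_ann_succ A ⟨(j:ℕ)-1, by omega⟩ kk (by omega)
      have e2 := ann_mul_lt A ((j:ℕ)-1) hp k
      have hj' : (⟨(j:ℕ)-1+1, hp⟩ : Fin (n+1)) = j := by apply Fin.ext; simp; omega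
      rw [hkfin] at e2 ⊢
      rw [hrel, e2, hj'] at e1
      rw [ih ⟨(j:ℕ)-1, by omega⟩ ⟨kk, by omega⟩ rfl (by simp; omega)] at e1
      have hs := sqrt_succ_ne ((j:ℕ)-1)
      rw [mul_zero] at e1
      rcases mul_eq_zero.mp e1 with h' | h'
      · exact absurd h' hs
      · exact h'
  -- diagonal is constant
  have hdiag : ∀ (p : ℕ) (hp : p < n+1), A ⟨p, hp⟩ ⟨p, hp⟩ = A 0 0 := by
    intro p
    induction p with
    | zero => intro hp; rfl
    | succ p ih =>
      intro hp
      have hp' : p < n + 1 := by omega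
      have e1 := mul_ann_succ A ⟨p, hp'⟩ p hp
      have e2 := ann_mul_lt A p hp ⟨p+1, hp⟩
      rw [hrel, e2] at e1
      have hs := sqrt_succ_ne p
      have := mul_left_cancel₀ hs e1.symm
      rw [← this]
      exact ih hp'
  ext i j
  rcases lt_trichotomy (i:ℕ) (j:ℕ) with hij | hij | hij
  · have h0 : A j i = 0 := hlow (i:ℕ) j i rfl hij
    have hs : A i j = star (A j i) := by
      conv_lhs => rw [← hA]
      simp [Matrix.conjTranspose_apply]
    rw [hs, h0, star_zero]
    have : i ≠ j := by intro hh; rw [hh] at hij; omega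
    simp [Matrix.one_apply, this]
  · have : i = j := Fin.ext hij
    subst this
    have := hdiag (i:ℕ) i.isLt
    simp only [Fin.eta] at this
    simp [Matrix.one_apply, this]
  · have h0 : A i j = 0 := hlow (j:ℕ) i j rfl hij
    have : i ≠ j := by intro hh; rw [hh] at hij; omega
    simp [Matrix.one_apply, this, h0]

lemma trace_self_mul_conjTranspose_nonneg (N : Matrix (Fin (n+1)) (Fin (n+1)) ℂ) :
    0 ≤ (N * Nᴴ).trace := by
  rw [Matrix.trace]
  refine Finset.sum_nonneg fun i _ => ?_
  simp only [Matrix.diag_apply, Matrix.mul_apply, Matrix.conjTranspose_apply]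
  exact Finset.sum_nonneg fun j _ => mul_star_self_nonneg _

lemma eq_zero_of_trace_self_mul_conjTranspose
    (N : Matrix (Fin (n+1)) (Fin (n+1)) ℂ) (h : (N * Nᴴ).trace = 0) : N = 0 := by
  have hrow : ∀ i, dotProduct (N i) (star (N i)) = 0 := by
    intro i
    have h0 : ∀ i ∈ Finset.univ, (0:ℂ) ≤ dotProduct (N i) (star (N i)) :=
      fun i _ => dotProduct_self_star_nonneg _
    refine (Finset.sum_eq_zero_iff_of_nonneg h0).1 ?_ i (Finset.mem_univ i)
    rw [← h, Matrix.trace]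
    refine Finset.sum_congr rfl fun i _ => ?_
    simp [Matrix.mul_apply, Matrix.conjTranspose_apply, dotProduct, Pi.star_apply]
  ext i j
  exact congrFun (dotProduct_self_star_eq_zero.1 (hrow i)) j

end Aux

theorem vanishing_dissipation_forces_equilibrium {n m : ℕ}
    (L : Fin m → Matrix (Fin (n+1)) (Fin (n+1)) ℂ)
    (c : ℂ) (hc : c ≠ 0) (k₀ : Fin m) (hk₀ : L k₀ = c • ann n)
    (ρinf ρ G : Matrix (Fin (n+1)) (Fin (n+1)) ℂ)
    (hρinf : ρinf.PosDef) (htrinf : ρinf.trace = 1)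
    (hρ : ρ.IsHermitian) (htr : ρ.trace = 1)
    (hG : G.IsHermitian) (hLyap : ρinf * G + G * ρinf = ρ - ρinf)
    (hdiss : ∑ k, ((G * L k - L k * G) * ρinf * (G * L k - L k * G)ᴴ).trace = 0) :
    G = 0 ∧ ρ = ρinf := by
  obtain ⟨S, hSS, hSH⟩ : ∃ S : Matrix (Fin (n+1)) (Fin (n+1)) ℂ, S * S = ρinf ∧ Sᴴ = S := by
    open scoped MatrixOrder in
    exact ⟨CFC.sqrt ρinf, CFC.sqrt_mul_sqrt_self ρinf hρinf.posSemidef.nonneg,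
      (CFC.sqrt_nonneg ρinf).posSemidef.isHermitian⟩
  have hterm : ∀ k : Fin m,
      (G * L k - L k * G) * ρinf * (G * L k - L k * G)ᴴ =
      ((G * L k - L k * G) * S) * ((G * L k - L k * G) * S)ᴴ := by
    intro k
    rw [Matrix.conjTranspose_mul, hSH, ← Matrix.mul_assoc,
      Matrix.mul_assoc ((G * L k - L k * G)) S S, hSS]
  -- every summand vanishes
  have hzero : ∀ k : Fin m,
      ((G * L k - L k * G) * ρinf * (G * L k - L k * G)ᴴ).trace = 0 := by
    have h0 : ∀ k ∈ Finset.univ,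
        (0:ℂ) ≤ ((G * L k - L k * G) * ρinf * (G * L k - L k * G)ᴴ).trace := by
      intro k _
      rw [hterm k]
      exact trace_self_mul_conjTranspose_nonneg _
    exact fun k => (Finset.sum_eq_zero_iff_of_nonneg h0).1 hdiss k (Finset.mem_univ k)
  -- hence the commutator with c • ann vanishes against S
  have hNS : (G * L k₀ - L k₀ * G) * S = 0 := by
    apply eq_zero_of_trace_self_mul_conjTranspose
    rw [← hterm k₀]
    exact hzero k₀
  have hM : G * L k₀ - L k₀ * G = 0 := by
    have hdet : IsUnit ρinf.det := hρinf.det_pos.ne'.isUnit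
    have h1 : (G * L k₀ - L k₀ * G) * ρinf = 0 := by
      rw [← hSS, ← Matrix.mul_assoc, hNS, Matrix.zero_mul]
    calc G * L k₀ - L k₀ * G
        = (G * L k₀ - L k₀ * G) * (ρinf * ρinf⁻¹) := by
          rw [Matrix.mul_nonsing_inv _ hdet, Matrix.mul_one]
      _ = ((G * L k₀ - L k₀ * G) * ρinf) * ρinf⁻¹ := by rw [Matrix.mul_assoc]
      _ = 0 := by rw [h1, Matrix.zero_mul]
  -- so G commutes with ann
  have hcomm : G * ann n = ann n * G := by
    rw [hk₀] at hM
    have : c • (G * ann n - ann n * G) = 0 := by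
      rw [smul_sub, ← Matrix.mul_smul, ← Matrix.smul_mul]
      exact hM
    have h2 := (smul_eq_zero.mp this).resolve_left hc
    linear_combination (norm := abel) h2
  -- hence G is scalar
  have hscal : G = G 0 0 • (1 : Matrix (Fin (n+1)) (Fin (n+1)) ℂ) :=
    comm_scalar G hG hcomm
  -- take traces in the Lyapunov equation
  have htrL : (ρinf * G + G * ρinf).trace = (ρ - ρinf).trace := by rw [hLyap]
  rw [Matrix.trace_add, Matrix.trace_sub, htr, htrinf, sub_self, hscal,
    Matrix.mul_smul, Matrix.mul_one, Matrix.smul_mul, Matrix.one_mul,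
    Matrix.trace_smul] at htrL
  rw [htrinf, smul_eq_mul, mul_one] at htrL
  have hα : G 0 0 = 0 := by
    have : (2:ℂ) * G 0 0 = 0 := by linear_combination htrL
    simpa [two_ne_zero] using mul_eq_zero.mp this
  have hG0 : G = 0 := by rw [hscal, hα, zero_smul]
  refine ⟨hG0, ?_⟩
  have := hLyap
  rw [hG0, Matrix.mul_zero, Matrix.zero_mul, add_zero] at this
  linear_combination (norm := abel) -this
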